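/- Suppose ℓ ≥ 1 is the minimal eventual period of a and k ≥ 0 is a pre-period, i.e., a(j+ℓ) = a(j) for all j > k. Let M₁ = ∏_{j=k+1}^{k+ℓ} [[0,1],[1,a(j)]] be the corresponding product of 2×2 real matrices (taken in increasing order of j) and let τ = tr(M₁). Then the Lévy constant exists and equals (1/ℓ) times the logarithm of the spectral radius of M₁; explicitly, lim_{n→∞} (log q(n))/n = (1/ℓ)·log( (τ + √(τ² − 4·(−1)^ℓ))/2 ), and (τ + √(τ² − 4·(−1)^ℓ))/2 is the largest absolute value of a (real) eigenvalue of M₁. -/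

import Mathlib

open Filter

private def levyC (a : ℕ → ℕ) (j : ℕ) : Matrix (Fin 2) (Fin 2) ℝ :=
  !![(0 : ℝ), 1; 1, (a j : ℝ)]

private lemma levy_vecMul_prod (a : ℕ → ℕ) (v : ℕ → Fin 2 → ℝ)
    (hstep : ∀ n, v (n + 1) = Matrix.vecMul (v n) (levyC a (n + 1))) :
    ∀ (t s : ℕ), v (s + t) =
      Matrix.vecMul (v s) (((List.range t).map (fun i => levyC a (s + 1 + i))).prod) := by
  intro t
  induction t with
  | zero => intro s; simp
  | succ t ih =>
    intro s
    have h1 : s + (t + 1) = (s + 1) + t := by omega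
    have h2 : ((List.range (t + 1)).map (fun i => levyC a (s + 1 + i))).prod
        = levyC a (s + 1) * ((List.range t).map (fun i => levyC a (s + 1 + 1 + i))).prod := by
      rw [List.range_succ_eq_map, List.map_cons, List.prod_cons, List.map_map]
      have h3 : ((fun i => levyC a (s + 1 + i)) ∘ Nat.succ) = (fun i => levyC a (s + 1 + 1 + i)) := by
        funext i
        simp only [Function.comp_apply]
        have h4 : s + 1 + i.succ = s + 1 + 1 + i := by omega
        rw [h4]
      rw [h3]
    rw [h1, ih (s + 1), hstep s, Matrix.vecMul_vecMul, h2]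

private lemma levy_rec_closed (Q : ℕ → ℝ) (τ d lam mu : ℝ)
    (hrec : ∀ m, Q (m + 2) = τ * Q (m + 1) - d * Q m)
    (hl : lam ^ 2 = τ * lam - d) (hm : mu ^ 2 = τ * mu - d) (hne : lam ≠ mu) :
    ∀ m, Q m = ((Q 1 - mu * Q 0) / (lam - mu)) * lam ^ m
             + ((lam * Q 0 - Q 1) / (lam - mu)) * mu ^ m := by
  have hd0 : lam - mu ≠ 0 := sub_ne_zero.mpr hne
  set A := (Q 1 - mu * Q 0) / (lam - mu) with hA
  set B := (lam * Q 0 - Q 1) / (lam - mu) with hB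
  have key : ∀ m, Q m = A * lam ^ m + B * mu ^ m ∧
      Q (m + 1) = A * lam ^ (m + 1) + B * mu ^ (m + 1) := by
    intro m
    induction m with
    | zero =>
      constructor
      · rw [hA, hB]; field_simp; ring
      · rw [hA, hB]; field_simp; ring
    | succ m ih =>
      refine ⟨ih.2, ?_⟩
      rw [hrec m, ih.1, ih.2]
      linear_combination (-(A * lam ^ m)) * hl + (-(B * mu ^ m)) * hm
  exact fun m => (key m).1

private lemma levy_bdd_of_tendsto (f : ℕ → ℝ) (aa : ℝ)
    (h : Tendsto f atTop (nhds aa)) : ∃ C : ℝ, ∀ n, |f n| ≤ C := by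
  obtain ⟨Cu, hCu⟩ := h.bddAbove_range
  obtain ⟨Cl, hCl⟩ := h.bddBelow_range
  refine ⟨max Cu (-Cl), fun n => abs_le.mpr ⟨?_, ?_⟩⟩
  · have h1 : Cl ≤ f n := hCl (Set.mem_range_self n)
    have : -max Cu (-Cl) ≤ -(-Cl) := neg_le_neg (le_max_right _ _)
    simpa using this.trans (by linarith)
  · exact (hCu (Set.mem_range_self n)).trans (le_max_left _ _)

private lemma levy_tendsto_of_bdd (f : ℕ → ℝ) (c C : ℝ)
    (h : ∀ᶠ n : ℕ in atTop, |f n - n * c| ≤ C) :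
    Tendsto (fun n : ℕ => f n / n) atTop (nhds c) := by
  rw [← tendsto_sub_nhds_zero_iff]
  apply squeeze_zero_norm' (a := fun n : ℕ => C / n)
  · filter_upwards [h, eventually_ge_atTop 1] with n hn hn1
    have hn0 : (0 : ℝ) < n := by exact_mod_cast hn1
    have he : f n / n - c = (f n - n * c) / n := by field_simp
    rw [he, Real.norm_eq_abs, abs_div, abs_of_pos hn0]
    gcongr
  · exact tendsto_const_div_atTop_nhds_zero_nat C

private lemma levy_ch2 (X : Matrix (Fin 2) (Fin 2) ℝ) :
    X * X = (Matrix.trace X) • X - (X.det) • (1 : Matrix (Fin 2) (Fin 2) ℝ) := by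
  ext i j
  fin_cases i <;> fin_cases j <;>
    simp [Matrix.mul_apply, Fin.sum_univ_two, Matrix.trace_fin_two, Matrix.det_fin_two,
      Matrix.one_apply] <;> ring

private lemma levy_det_prod : ∀ l : List (Matrix (Fin 2) (Fin 2) ℝ),
    l.prod.det = (l.map Matrix.det).prod := by
  intro l
  induction l with
  | nil => simp
  | cons x xs ih => simp [Matrix.det_mul, ih]

private lemma levy_prod_neg_one : ∀ t : ℕ, ((List.range t).map (fun _ : ℕ => (-1 : ℝ))).prod = (-1) ^ t := by
  intro t
  induction t with
  | zero => simp
  | succ t ih => rw [List.range_succ, List.map_append, List.prod_append]; simp [ih, pow_succ]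

private lemma levyV_one (q : ℕ → ℤ) (n : ℕ) :
    (![if n = 0 then 0 else ((q (n - 1) : ℤ) : ℝ), ((q n : ℤ) : ℝ)] : Fin 2 → ℝ) 1
      = ((q n : ℤ) : ℝ) := by simp

private noncomputable def levyV (q : ℕ → ℤ) (n : ℕ) : Fin 2 → ℝ :=
  ![if n = 0 then 0 else ((q (n - 1) : ℤ) : ℝ), ((q n : ℤ) : ℝ)]

private lemma levyV_snd (q : ℕ → ℤ) (n : ℕ) : levyV q n 1 = ((q n : ℤ) : ℝ) := by
  simp [levyV]

private lemma levy_vecMul_snd (x : Fin 2 → ℝ) (Y : Matrix (Fin 2) (Fin 2) ℝ) :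
    (Matrix.vecMul x Y) 1 = x 0 * Y 0 1 + x 1 * Y 1 1 := by
  simp [Matrix.vecMul, dotProduct, Fin.sum_univ_two]

set_option maxHeartbeats 1600000 in
/-- For eventually periodic partial quotients with minimal period `ℓ`
and pre-period `k`, the Lévy constant `lim (log q n)/n` exists and equals
`(1/ℓ)·log` of the spectral radius of `M₁ = ∏_{j=k+1}^{k+ℓ} [[0,1],[1,a j]]`,
which is `(τ + √(τ² − 4(−1)^ℓ))/2` with `τ = tr M₁`; this number is the largest
absolute value of a real eigenvalue of `M₁`. -/
theorem levy_constant_eq_log_spectral_radius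
    (a : ℕ → ℕ) (ha : ∀ j, 1 ≤ j → 1 ≤ a j)
    (p q : ℕ → ℤ)
    (hp0 : p 0 = 0) (hp1 : p 1 = 1)
    (hp : ∀ n, 2 ≤ n → p n = (a n : ℤ) * p (n - 1) + p (n - 2))
    (hq0 : q 0 = 1) (hq1 : q 1 = (a 1 : ℤ))
    (hq : ∀ n, 2 ≤ n → q n = (a n : ℤ) * q (n - 1) + q (n - 2))
    (ℓ k : ℕ) (hℓ : 1 ≤ ℓ)
    (hper : ∀ j, k < j → a (j + ℓ) = a j)
    (hmin : ∀ ℓ', 1 ≤ ℓ' → ℓ' < ℓ → ¬ ∃ N, ∀ j, N ≤ j → a (j + ℓ') = a j)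
    (M : Matrix (Fin 2) (Fin 2) ℝ)
    (hM : M = ((List.range ℓ).map (fun i => !![(0 : ℝ), 1; 1, (a (k + 1 + i) : ℝ)])).prod)
    (τ : ℝ) (hτ : τ = Matrix.trace M)
    (lam : ℝ) (hlam : lam = (τ + Real.sqrt (τ ^ 2 - 4 * (-1 : ℝ) ^ ℓ)) / 2) :
    Tendsto (fun n : ℕ => Real.log (q n : ℝ) / n) atTop
        (nhds ((1 / (ℓ : ℝ)) * Real.log lam)) ∧
    (∃ v : Fin 2 → ℝ, v ≠ 0 ∧ M.mulVec v = lam • v) ∧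
    (∀ μ : ℝ, (∃ v : Fin 2 → ℝ, v ≠ 0 ∧ M.mulVec v = μ • v) → |μ| ≤ lam) := by
  -- basic facts about q
  have hqpm : ∀ n : ℕ, 1 ≤ q n ∧ q n ≤ q (n + 1) := by
    intro n
    induction n with
    | zero =>
      refine ⟨hq0.ge, ?_⟩
      rw [hq0, hq1]
      exact_mod_cast ha 1 le_rfl
    | succ n ih =>
      have h2 : q (n + 2) = (a (n + 2) : ℤ) * q (n + 1) + q n := by
        have := hq (n + 2) (by omega)
        simpa using this
      have ha2 : (1 : ℤ) ≤ (a (n + 2) : ℤ) := by exact_mod_cast ha (n + 2) (by omega)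
      refine ⟨le_trans ih.1 ih.2, ?_⟩
      rw [h2]; nlinarith [ih.1, ih.2]
  have hq1' : ∀ n, (1 : ℤ) ≤ q n := fun n => (hqpm n).1
  have hqmono : Monotone q := monotone_nat_of_le_succ fun n => (hqpm n).2
  have hper' : ∀ m j, k < j → a (j + m * ℓ) = a j := by
    intro m
    induction m with
    | zero => intro j _; simp
    | succ m ih =>
      intro j hj
      have e : j + (m + 1) * ℓ = (j + m * ℓ) + ℓ := by ring
      rw [e, hper (j + m * ℓ) (by omega), ih j hj]
  have hM' : M = ((List.range ℓ).map (fun i => levyC a (k + 1 + i))).prod := hM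
  -- entries of a product with an elementary matrix
  have hE : ∀ (X : Matrix (Fin 2) (Fin 2) ℝ) (j : ℕ),
      (X * levyC a j) 0 0 = X 0 1 ∧ (X * levyC a j) 0 1 = X 0 0 + X 0 1 * (a j : ℝ) ∧
      (X * levyC a j) 1 0 = X 1 1 ∧ (X * levyC a j) 1 1 = X 1 0 + X 1 1 * (a j : ℝ) := by
    intro X j
    refine ⟨?_, ?_, ?_, ?_⟩ <;> simp [levyC, Matrix.mul_apply, Fin.sum_univ_two]
  have hsp : ∀ (f : ℕ → Matrix (Fin 2) (Fin 2) ℝ) (t : ℕ),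
      ((List.range (t + 1)).map f).prod = ((List.range t).map f).prod * f t := by
    intro f t
    rw [List.range_succ, List.map_append, List.prod_append]
    simp
  have haR : ∀ j : ℕ, (1 : ℝ) ≤ (a (k + 1 + j) : ℝ) := by
    intro j; exact_mod_cast ha (k + 1 + j) (by omega)
  -- entries invariant for partial products
  have hPt : ∀ t, 1 ≤ t →
      0 ≤ (((List.range t).map (fun i => levyC a (k + 1 + i))).prod) 0 0 ∧
      1 ≤ (((List.range t).map (fun i => levyC a (k + 1 + i))).prod) 0 1 ∧
      1 ≤ (((List.range t).map (fun i => levyC a (k + 1 + i))).prod) 1 0 ∧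
      1 ≤ (((List.range t).map (fun i => levyC a (k + 1 + i))).prod) 1 1 := by
    intro t
    induction t with
    | zero => omega
    | succ t ih =>
      intro _
      rcases Nat.eq_zero_or_pos t with rfl | ht
      · rw [hsp]
        simp only [List.range_zero, List.map_nil, List.prod_nil, one_mul]
        refine ⟨?_, ?_, ?_, ?_⟩ <;> simp [levyC]
        exact_mod_cast ha (k + 1 + 0) (by omega)
      · obtain ⟨i1, i2, i3, i4⟩ := ih ht
        rw [hsp]
        obtain ⟨e1, e2, e3, e4⟩ := hE (((List.range t).map (fun i => levyC a (k + 1 + i))).prod)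
          (k + 1 + t)
        rw [e1, e2, e3, e4]
        have := haR t
        refine ⟨by linarith, by nlinarith, by linarith, by nlinarith⟩
  have hPtl := hPt ℓ hℓ
  have hM01 : 1 ≤ M 0 1 := by rw [hM']; exact hPtl.2.1
  have htau1 : 1 ≤ τ := by
    rw [hτ, Matrix.trace_fin_two]
    have := hPtl.1; have := hPtl.2.2.2
    rw [hM']; linarith
  have htau3 : 2 ≤ ℓ → 3 ≤ τ := by
    intro h2
    obtain ⟨t, rfl⟩ : ∃ t, ℓ = t + 1 := ⟨ℓ - 1, by omega⟩
    have ht : 1 ≤ t := by omega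
    obtain ⟨i1, i2, i3, i4⟩ := hPt t ht
    obtain ⟨e1, e2, e3, e4⟩ := hE (((List.range t).map (fun i => levyC a (k + 1 + i))).prod)
      (k + 1 + t)
    have := haR t
    rw [hτ, Matrix.trace_fin_two, hM', hsp, e1, e4]
    nlinarith
  -- the vector recursion
  have hstep : ∀ n, levyV q (n + 1) = Matrix.vecMul (levyV q n) (levyC a (n + 1)) := by
    intro n
    match n with
    | 0 =>
      funext i
      fin_cases i <;>
        simp [levyV, levyC, Matrix.vecMul, dotProduct, Fin.sum_univ_two, hq0, hq1]
    | (n + 1) =>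
      have h2 : ((q (n + 2) : ℤ) : ℝ) = (a (n + 2) : ℝ) * ((q (n + 1) : ℤ) : ℝ)
          + ((q n : ℤ) : ℝ) := by
        have h3 := hq (n + 2) (by omega)
        simp only [Nat.add_sub_cancel] at h3
        have h4 : n + 2 - 1 = n + 1 := by omega
        rw [h4] at h3
        exact_mod_cast h3
      funext i
      fin_cases i <;>
        simp [levyV, levyC, Matrix.vecMul, dotProduct, Fin.sum_univ_two]
      rw [h2]; ring
  have hvp := levy_vecMul_prod a (levyV q) hstep ℓ
  have hPM : ∀ m : ℕ, ((List.range ℓ).map (fun i => levyC a (k + m * ℓ + 1 + i))).prod = M := by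
    intro m
    rw [hM']
    congr 1
    apply List.map_congr_left
    intro i hi
    have hi' := List.mem_range.mp hi
    have e : k + m * ℓ + 1 + i = (k + 1 + i) + m * ℓ := by ring
    rw [e]
    unfold levyC
    rw [hper' m (k + 1 + i) (by omega)]
  have hv1 : ∀ m, levyV q (k + (m + 1) * ℓ) = Matrix.vecMul (levyV q (k + m * ℓ)) M := by
    intro m
    have e : k + (m + 1) * ℓ = (k + m * ℓ) + ℓ := by ring
    rw [e, hvp (k + m * ℓ), hPM m]
  have hdet : M.det = (-1 : ℝ) ^ ℓ := by
    rw [hM', levy_det_prod, List.map_map]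
    have hfn : (Matrix.det ∘ fun i => levyC a (k + 1 + i)) = fun _ : ℕ => (-1 : ℝ) := by
      funext i
      simp [Function.comp, levyC, Matrix.det_fin_two_of]
    rw [hfn, levy_prod_neg_one]
  have hMM : M * M = τ • M - ((-1 : ℝ) ^ ℓ) • (1 : Matrix (Fin 2) (Fin 2) ℝ) := by
    rw [levy_ch2 M, ← hτ, hdet]
  have hY01 : (τ • M - ((-1 : ℝ) ^ ℓ) • (1 : Matrix (Fin 2) (Fin 2) ℝ)) 0 1 = τ * M 0 1 := by
    simp [Matrix.sub_apply, Matrix.smul_apply, Matrix.one_apply]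
  have hY11 : (τ • M - ((-1 : ℝ) ^ ℓ) • (1 : Matrix (Fin 2) (Fin 2) ℝ)) 1 1
      = τ * M 1 1 - (-1 : ℝ) ^ ℓ := by
    simp [Matrix.sub_apply, Matrix.smul_apply, Matrix.one_apply]
  have hQrec : ∀ m : ℕ, ((q (k + (m + 2) * ℓ) : ℤ) : ℝ)
      = τ * ((q (k + (m + 1) * ℓ) : ℤ) : ℝ) - ((-1 : ℝ) ^ ℓ) * ((q (k + m * ℓ) : ℤ) : ℝ) := by
    intro m
    have h1 := hv1 m
    have h2 := hv1 (m + 1)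
    rw [h1, Matrix.vecMul_vecMul, hMM] at h2
    have e1 := congrFun h1 1
    have e2 := congrFun h2 1
    rw [levy_vecMul_snd, levyV_snd, levyV_snd, hY01, hY11] at e2
    rw [levy_vecMul_snd, levyV_snd, levyV_snd] at e1
    have e3 : k + (m + 1 + 1) * ℓ = k + (m + 2) * ℓ := by ring
    rw [e3] at e2
    linear_combination e2 - τ * e1
  -- algebra of the eigenvalues
  set d : ℝ := (-1 : ℝ) ^ ℓ with hd
  have hD : 0 < τ ^ 2 - 4 * d := by
    rcases Nat.even_or_odd ℓ with he | ho
    · have h2 : 2 ≤ ℓ := by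
        rcases he with ⟨c, hc⟩; omega
      have hd1 : d = 1 := by rw [hd]; exact he.neg_one_pow
      have := htau3 h2
      nlinarith
    · have hd1 : d = -1 := by rw [hd]; exact ho.neg_one_pow
      nlinarith
  have hs2 : Real.sqrt (τ ^ 2 - 4 * d) ^ 2 = τ ^ 2 - 4 * d := Real.sq_sqrt hD.le
  have hspos : 0 < Real.sqrt (τ ^ 2 - 4 * d) := Real.sqrt_pos.mpr hD
  have hroot : lam ^ 2 = τ * lam - d := by
    rw [hlam]; linear_combination hs2 / 4
  have hlam1 : 1 < lam := by
    rcases Nat.even_or_odd ℓ with he | ho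
    · have h2 := htau3 (by rcases he with ⟨c, hc⟩; omega)
      rw [hlam]
      nlinarith [Real.sqrt_nonneg (τ ^ 2 - 4 * d)]
    · have hd1 : d = -1 := by rw [hd]; exact ho.neg_one_pow
      have hts : τ < Real.sqrt (τ ^ 2 - 4 * d) := by
        rw [Real.lt_sqrt (by linarith)]
        nlinarith
      rw [hlam]; linarith
  have hlampos : 0 < lam := lt_trans one_pos hlam1
  set μ : ℝ := τ - lam with hμ
  have hmuroot : μ ^ 2 = τ * μ - d := by rw [hμ]; linear_combination hroot
  have hlammu : lam * μ = d := by rw [hμ]; linear_combination -hroot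
  have hlm : lam - μ = Real.sqrt (τ ^ 2 - 4 * d) := by rw [hμ, hlam]; ring
  have hne : lam ≠ μ := by
    intro h
    rw [h, sub_self] at hlm
    exact absurd hlm.symm (ne_of_gt hspos)
  have habs : lam * |μ| = 1 := by
    have h1 : |lam * μ| = 1 := by
      rw [hlammu, hd, abs_pow]
      simp
    rw [abs_mul, abs_of_pos hlampos] at h1
    exact h1
  have hminv : |μ| = 1 / lam := by
    rw [eq_div_iff (ne_of_gt hlampos)]
    linear_combination habs
  have hmuabs1 : |μ| < 1 := by
    rw [hminv]
    exact (div_lt_one hlampos).mpr hlam1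
  have hmul : |μ| < lam := lt_trans hmuabs1 hlam1
  -- closed form for the subsequence
  have hclosed := levy_rec_closed (fun m => ((q (k + m * ℓ) : ℤ) : ℝ)) τ d lam μ hQrec hroot
    hmuroot hne
  set Q0 : ℝ := ((q (k + 0 * ℓ) : ℤ) : ℝ) with hQ0
  set Q1 : ℝ := ((q (k + 1 * ℓ) : ℤ) : ℝ) with hQ1
  set A : ℝ := (Q1 - μ * Q0) / (lam - μ) with hA
  set B : ℝ := (lam * Q0 - Q1) / (lam - μ) with hB
  have hQ0ge : (1 : ℝ) ≤ Q0 := by rw [hQ0]; exact_mod_cast hq1' (k + 0 * ℓ)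
  have hQ01 : Q0 ≤ Q1 := by
    rw [hQ0, hQ1]
    exact_mod_cast hqmono (by omega : k + 0 * ℓ ≤ k + 1 * ℓ)
  have hnum : 0 < Q1 - μ * Q0 := by
    have h1 : μ * Q0 ≤ |μ| * Q0 :=
      mul_le_mul_of_nonneg_right (le_abs_self μ) (by linarith)
    have h2 : |μ| * Q0 < 1 * Q0 :=
      mul_lt_mul_of_pos_right hmuabs1 (by linarith)
    linarith
  have hApos : 0 < A := by
    rw [hA]
    apply div_pos hnum
    rw [hlm]; exact hspos
  -- log asymptotics along the subsequence
  have hr : |μ / lam| < 1 := by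
    rw [abs_div, abs_of_pos hlampos]
    exact (div_lt_one hlampos).mpr hmul
  have hrt : Filter.Tendsto (fun m : ℕ => (μ / lam) ^ m) Filter.atTop (nhds 0) :=
    tendsto_pow_atTop_nhds_zero_iff.mpr hr
  have htendA : Filter.Tendsto (fun m : ℕ => A + B * (μ / lam) ^ m) Filter.atTop (nhds A) := by
    have h1 := (hrt.const_mul B).const_add A
    simpa using h1
  have hgt : Filter.Tendsto
      (fun m : ℕ => Real.log ((q (k + m * ℓ) : ℤ) : ℝ) - m * Real.log lam)
      Filter.atTop (nhds (Real.log A)) := by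
    have hcont := (Real.continuousAt_log (ne_of_gt hApos)).tendsto.comp htendA
    apply hcont.congr
    intro m
    have hqm : (0 : ℝ) < ((q (k + m * ℓ) : ℤ) : ℝ) := by
      exact_mod_cast lt_of_lt_of_le zero_lt_one (hq1' (k + m * ℓ))
    have hcm : ((q (k + m * ℓ) : ℤ) : ℝ) = A * lam ^ m + B * μ ^ m := hclosed m
    have hform : A + B * (μ / lam) ^ m = ((q (k + m * ℓ) : ℤ) : ℝ) / lam ^ m := by
      rw [hcm]
      field_simp
      rw [add_mul, mul_assoc, ← mul_pow, div_mul_cancel₀ μ (ne_of_gt hlampos)]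
    simp only [Function.comp_apply]
    rw [hform, Real.log_div (ne_of_gt hqm) (ne_of_gt (pow_pos hlampos m)), Real.log_pow]
  obtain ⟨Cg, hCg⟩ := levy_bdd_of_tendsto _ _ hgt
  clear hE hsp hPt hPtl hvp hPM hv1 hstep hMM hY01 hY11 hQrec hclosed hrt htendA hgt
  set L : ℝ := Real.log lam with hLdef
  have hLpos : 0 < L := Real.log_pos hlam1
  have hlRpos : (0 : ℝ) < (ℓ : ℝ) := by exact_mod_cast hℓ
  have hcnn : 0 ≤ L / (ℓ : ℝ) := div_nonneg hLpos.le hlRpos.le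
  have hbound : ∀ᶠ n : ℕ in Filter.atTop,
      |Real.log ((q n : ℤ) : ℝ) - n * (L / ℓ)| ≤ Cg + L + k * (L / ℓ) := by
    rw [Filter.eventually_atTop]
    refine ⟨k, fun n hn => ?_⟩
    set m := (n - k) / ℓ with hmdef
    have e1 : n - k = m * ℓ + (n - k) % ℓ := by
      rw [hmdef, mul_comm]
      exact (Nat.div_add_mod _ _).symm
    have hrlt : (n - k) % ℓ < ℓ := Nat.mod_lt _ hℓ
    have e2 : (m + 1) * ℓ = m * ℓ + ℓ := by ring
    have hlow : k + m * ℓ ≤ n := by omega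
    have hhigh : n ≤ k + (m + 1) * ℓ := by omega
    have hb1 : |Real.log ((q (k + m * ℓ) : ℤ) : ℝ) - m * L| ≤ Cg := hCg m
    have hb2 : |Real.log ((q (k + (m + 1) * ℓ) : ℤ) : ℝ) - ((m : ℝ) + 1) * L| ≤ Cg := by
      have := hCg (m + 1)
      push_cast at this ⊢
      exact this
    rw [abs_le] at hb1 hb2
    have hql : ((q (k + m * ℓ) : ℤ) : ℝ) ≤ ((q n : ℤ) : ℝ) := by exact_mod_cast hqmono hlow
    have hqh : ((q n : ℤ) : ℝ) ≤ ((q (k + (m + 1) * ℓ) : ℤ) : ℝ) := by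
      exact_mod_cast hqmono hhigh
    have hq1l : (1 : ℝ) ≤ ((q (k + m * ℓ) : ℤ) : ℝ) := by exact_mod_cast hq1' _
    have hq1n : (0 : ℝ) < ((q n : ℤ) : ℝ) := by
      exact_mod_cast lt_of_lt_of_le zero_lt_one (hq1' n)
    have hlog1 : Real.log ((q (k + m * ℓ) : ℤ) : ℝ) ≤ Real.log ((q n : ℤ) : ℝ) :=
      Real.log_le_log (by linarith) hql
    have hlog2 : Real.log ((q n : ℤ) : ℝ) ≤ Real.log ((q (k + (m + 1) * ℓ) : ℤ) : ℝ) :=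
      Real.log_le_log hq1n hqh
    have hc1 : ((k : ℝ) + m * ℓ) * (L / ℓ) ≤ n * (L / ℓ) := by
      apply mul_le_mul_of_nonneg_right _ hcnn
      exact_mod_cast hlow
    have hc2 : (n : ℝ) * (L / ℓ) ≤ ((k : ℝ) + ((m : ℝ) + 1) * ℓ) * (L / ℓ) := by
      apply mul_le_mul_of_nonneg_right _ hcnn
      exact_mod_cast hhigh
    have eA : ((k : ℝ) + m * ℓ) * (L / ℓ) = k * (L / ℓ) + m * L := by
      field_simp
    have eB : ((k : ℝ) + ((m : ℝ) + 1) * ℓ) * (L / ℓ) = k * (L / ℓ) + m * L + L := by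
      field_simp
      ring
    have hknn : 0 ≤ (k : ℝ) * (L / ℓ) := mul_nonneg (Nat.cast_nonneg k) hcnn
    rw [abs_le]
    constructor
    · linarith [hb1.1, hlog1, hc2, eB]
    · linarith [hb2.2, hlog2, hc1, eA]
  have hmain : Filter.Tendsto (fun n : ℕ => Real.log ((q n : ℤ) : ℝ) / n) Filter.atTop
      (nhds (L / ℓ)) := levy_tendsto_of_bdd _ _ _ hbound
  have htr2 : M 0 0 + M 1 1 = τ := by rw [hτ, Matrix.trace_fin_two]
  have hdet2 : M 0 0 * M 1 1 - M 0 1 * M 1 0 = d := by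
    rw [← Matrix.det_fin_two]
    exact hdet
  refine ⟨?_, ⟨![M 0 1, lam - M 0 0], ?_, ?_⟩, ?_⟩
  · have he : (1 / (ℓ : ℝ)) * Real.log lam = L / ℓ := by rw [hLdef]; ring
    rw [he]
    exact hmain
  · intro hcontra
    have h0 := congrFun hcontra 0
    simp only [Matrix.cons_val_zero, Pi.zero_apply] at h0
    rw [h0] at hM01
    norm_num at hM01
  · funext i
    fin_cases i
    · simp only [Fin.zero_eta, Fin.isValue, Matrix.mulVec, dotProduct, Fin.sum_univ_two,
        Matrix.cons_val_zero, Matrix.cons_val_one, Matrix.head_cons, Pi.smul_apply, smul_eq_mul]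
      ring
    · simp only [Fin.mk_one, Fin.isValue, Matrix.mulVec, dotProduct, Fin.sum_univ_two,
        Matrix.cons_val_zero, Matrix.cons_val_one, Matrix.head_cons, Pi.smul_apply, smul_eq_mul]
      linear_combination -hroot + lam * htr2 - hdet2
  · rintro μ' ⟨w, hw0, hww⟩
    have h0 : (M - μ' • (1 : Matrix (Fin 2) (Fin 2) ℝ)).mulVec w = 0 := by
      rw [Matrix.sub_mulVec, Matrix.smul_mulVec, Matrix.one_mulVec, hww, sub_self]
    have hdet0 : (M - μ' • (1 : Matrix (Fin 2) (Fin 2) ℝ)).det = 0 := by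
      rw [← Matrix.exists_mulVec_eq_zero_iff]
      exact ⟨w, hw0, h0⟩
    rw [Matrix.det_fin_two] at hdet0
    simp only [Matrix.sub_apply, Matrix.smul_apply, Matrix.one_apply, smul_eq_mul] at hdet0
    norm_num at hdet0
    have hchar : μ' ^ 2 - τ * μ' + d = 0 := by
      linear_combination hdet0 + μ' * htr2 - hdet2
    have hfac : (μ' - lam) * (μ' - μ) = 0 := by
      rw [hμ]
      linear_combination hchar - hroot
    rcases mul_eq_zero.mp hfac with h | h
    · rw [sub_eq_zero.mp h, abs_of_pos hlampos]
    · rw [sub_eq_zero.mp h]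
      exact hmul.le
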